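/- arXiv:2510.21951 — 8 statements merged into one kernel-verified Lean document; each statement's English description precedes it below -/
import Mathlib

section
/- For fixed F ∈ [0,1), the function H(F,π) = (π-C)(1-F)·e^{p+qF-π}/(1+e^{p+qF-π}) of π ∈ ℝ attains a unique global maximum at π* = C + 1 + W(e^{p+qF-(C+1)}), where W is the principal branch of the Lambert W function. -/
noncomputable section

/-- Single-period profit. -/
def H (C p q F π : ℝ) : ℝ :=
  (π - C) * (1 - F) * (Real.exp (p + q * F - π) / (1 + Real.exp (p + q * F - π)))

/-- For fixed `F ∈ [0,1)`, the single-period profit `H` attains a unique global maximum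
at `π* = C + 1 + W (exp (p + q F - (C+1)))`, where `W` is the principal branch of the
Lambert W function. -/
theorem stmt_2 (C p q : ℝ) (hC : 0 ≤ C) (hp : 0 ≤ p) (hq : 0 ≤ q)
    (W : ℝ → ℝ) (hW : ∀ z : ℝ, 0 ≤ z → 0 ≤ W z ∧ W z * Real.exp (W z) = z)
    (F : ℝ) (hF : F ∈ Set.Ico (0:ℝ) 1) :
    ∀ π : ℝ, π ≠ C + 1 + W (Real.exp (p + q * F - (C + 1))) →
      H C p q F π < H C p q F (C + 1 + W (Real.exp (p + q * F - (C + 1)))) := by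
  intro π hπ
  set a := p + q * F with ha
  obtain ⟨hw0, hwe⟩ := hW (Real.exp (a - (C + 1))) (Real.exp_pos _).le
  set w := W (Real.exp (a - (C + 1))) with hwdef
  have hwpos : 0 < w := by
    rcases hw0.lt_or_eq with h | h
    · exact h
    · exfalso
      rw [← h, zero_mul] at hwe
      exact (Real.exp_pos (a - (C + 1))).ne' hwe.symm
  -- key identity: exp (a - (C+1) - w) = w
  have hkey : Real.exp (a - (C + 1) - w) = w := by
    rw [Real.exp_sub, ← hwe, mul_div_assoc, div_self (Real.exp_ne_zero w), mul_one]
  have hF1 : 0 < 1 - F := by have := hF.2; linarith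
  -- value at π* is (1-F) * w
  have hval : H C p q F (C + 1 + w) = (1 - F) * w := by
    unfold H
    have h1 : a - (C + 1 + w) = a - (C + 1) - w := by ring
    rw [h1, hkey]
    have h2 : (1 : ℝ) + w ≠ 0 := by positivity
    field_simp
    ring
  rw [hval]
  set E := Real.exp (a - π) with hE
  have hEpos : 0 < E := Real.exp_pos _
  have h1E : (0:ℝ) < 1 + E := by linarith
  -- main inequality: (π - C) * E < w * (1 + E)
  have hs : π - C - 1 - w ≠ 0 := fun h => hπ (by linarith [sub_eq_zero.mp h])
  have hlt : π - C < w + Real.exp (π - C - 1 - w) := by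
    have := Real.add_one_lt_exp hs
    linarith
  have hweE : Real.exp (π - C - 1 - w) * E = w := by
    rw [hE, ← Real.exp_add]
    have : π - C - 1 - w + (a - π) = a - (C + 1) - w := by ring
    rw [this, hkey]
  have hmain : (π - C) * E < w * (1 + E) := by
    have h2 : (π - C) * E < (w + Real.exp (π - C - 1 - w)) * E :=
      (mul_lt_mul_iff_left₀ hEpos).mpr hlt
    calc (π - C) * E < (w + Real.exp (π - C - 1 - w)) * E := h2
      _ = w * E + Real.exp (π - C - 1 - w) * E := by ring
      _ = w * E + w := by rw [hweE]
      _ = w * (1 + E) := by ring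
  -- conclude
  unfold H
  have hdiv : (π - C) * (E / (1 + E)) < w := by
    rw [mul_div_assoc'] at *
    exact (div_lt_iff₀ h1E).mpr hmain
  calc (π - C) * (1 - F) * (E / (1 + E))
      = (1 - F) * ((π - C) * (E / (1 + E))) := by ring
    _ < (1 - F) * w := (mul_lt_mul_iff_right₀ hF1).mpr hdiv
end
end

section
/- The optimal single-period price π*(F) = C + 1 + W(e^{p+qF-(C+1)}) is strictly positive, strictly increasing in F, strictly increasing in p, strictly increasing in C, and satisfies ∂π*/∂C = 1/(1 + W(e^{p+qF-(C+1)})) ∈ (0,1). -/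
open Real Filter

noncomputable def lamK : ℝ → ℝ := fun s => s + Real.exp s

lemma lamK_strictMono : StrictMono lamK := fun a b hab =>
  add_lt_add hab (Real.exp_lt_exp.2 hab)

lemma lamK_cont : Continuous lamK := continuous_id.add Real.continuous_exp

lemma lamK_surj : Function.Surjective lamK := by
  apply lamK_cont.surjective
  · apply Filter.Tendsto.atTop_add_nonneg tendsto_id
    intro x; exact (Real.exp_pos x).le
  · refine tendsto_atBot_mono' atBot ?_ (tendsto_atBot_add_const_right _ 1 tendsto_id)
    filter_upwards [eventually_le_atBot (0:ℝ)] with s hs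
    have : Real.exp s ≤ 1 := Real.exp_le_one_iff.2 hs
    simp only [lamK, id_eq]; linarith

noncomputable def lamIso : ℝ ≃o ℝ :=
  StrictMono.orderIsoOfSurjective lamK lamK_strictMono lamK_surj

noncomputable def lamS : ℝ → ℝ := fun x => lamIso.symm x

lemma lamK_lamS (x : ℝ) : lamK (lamS x) = x := by
  have h1 : (lamIso : ℝ → ℝ) = lamK := StrictMono.coe_orderIsoOfSurjective _ _ _
  calc lamK (lamS x) = lamIso (lamS x) := by rw [h1]
    _ = x := lamIso.apply_symm_apply x

lemma lamS_strictMono : StrictMono lamS := lamIso.symm.strictMono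

lemma lamS_cont : Continuous lamS := lamIso.symm.continuous

lemma lamS_hasDeriv (x : ℝ) :
    HasDerivAt lamS (1 / (1 + Real.exp (lamS x))) x := by
  have hk : HasDerivAt lamK (1 + Real.exp (lamS x)) (lamS x) := by
    exact (hasDerivAt_id (lamS x)).add (Real.hasDerivAt_exp (lamS x))
  have hne : (1 + Real.exp (lamS x)) ≠ 0 := by positivity
  have := HasDerivAt.of_local_left_inverse (g := lamS) (lamS_cont.continuousAt)
    hk hne (Filter.Eventually.of_forall fun y => lamK_lamS y)
  simpa [one_div] using this

lemma main_hasDeriv (a c : ℝ) :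
    HasDerivAt (fun c : ℝ => c + 1 + Real.exp (lamS (a - (c + 1))))
      (1 / (1 + Real.exp (lamS (a - (c + 1))))) c := by
  have hinner : HasDerivAt (fun c : ℝ => a - (c + 1)) (-1) c := by
    simpa using ((hasDerivAt_id c).add_const (1:ℝ)).const_sub a
  have hcomp := ((lamS_hasDeriv (a - (c + 1))).comp c hinner).exp
  have hfull := (((hasDerivAt_id c).add_const (1:ℝ))).add hcomp
  have hne : (1 : ℝ) + Real.exp (lamS (a - (c + 1))) ≠ 0 := by positivity
  convert hfull using 1
  · rfl
  · rfl
  · rfl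
  · simp only [Function.comp]
    field_simp
    ring

/-- Properties of the optimal single-period price
`π*(C,p,F) = C + 1 + W(e^{p+qF-(C+1)})`: strictly positive, strictly increasing in `F`,
in `p`, and in `C`, with `∂π*/∂C = 1/(1+W(e^{p+qF-(C+1)})) ∈ (0,1)`. -/
theorem stmt_5 (C p q : ℝ) (hC : 0 ≤ C) (hp : 0 ≤ p) (hq : 0 < q)
    (W : ℝ → ℝ) (hW : ∀ z : ℝ, 0 ≤ z → 0 ≤ W z ∧ W z * Real.exp (W z) = z)
    (F : ℝ) (hF : F ∈ Set.Icc (0:ℝ) 1) :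
    (0 < C + 1 + W (Real.exp (p + q * F - (C + 1)))) ∧
    (∀ F₁ ∈ Set.Icc (0:ℝ) 1, ∀ F₂ ∈ Set.Icc (0:ℝ) 1, F₁ < F₂ →
      C + 1 + W (Real.exp (p + q * F₁ - (C + 1))) <
        C + 1 + W (Real.exp (p + q * F₂ - (C + 1)))) ∧
    (∀ p₁ p₂ : ℝ, 0 ≤ p₁ → p₁ < p₂ →
      C + 1 + W (Real.exp (p₁ + q * F - (C + 1))) <
        C + 1 + W (Real.exp (p₂ + q * F - (C + 1)))) ∧
    (∀ C₁ C₂ : ℝ, 0 ≤ C₁ → C₁ < C₂ →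
      C₁ + 1 + W (Real.exp (p + q * F - (C₁ + 1))) <
        C₂ + 1 + W (Real.exp (p + q * F - (C₂ + 1)))) ∧
    HasDerivAt (fun c : ℝ => c + 1 + W (Real.exp (p + q * F - (c + 1))))
      (1 / (1 + W (Real.exp (p + q * F - (C + 1))))) C ∧
    1 / (1 + W (Real.exp (p + q * F - (C + 1)))) ∈ Set.Ioo (0:ℝ) 1 := by
  -- key: W (exp x) = exp (lamS x) for all x
  have gmono : StrictMonoOn (fun y : ℝ => y * Real.exp y) (Set.Ici 0) := by
    intro a ha b hb hab
    exact mul_lt_mul hab (Real.exp_le_exp.2 hab.le) (Real.exp_pos a) hb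
  have hWeq : ∀ x : ℝ, W (Real.exp x) = Real.exp (lamS x) := by
    intro x
    obtain ⟨hw0, hw⟩ := hW (Real.exp x) (Real.exp_pos x).le
    have h2 : Real.exp (lamS x) * Real.exp (Real.exp (lamS x)) = Real.exp x := by
      rw [← Real.exp_add]
      congr 1
      exact lamK_lamS x
    exact gmono.injOn hw0 (Real.exp_pos (lamS x)).le (hw.trans h2.symm)
  have hmono : ∀ a : ℝ,
      StrictMono (fun c : ℝ => c + 1 + Real.exp (lamS (a - (c + 1)))) := by
    intro a
    apply strictMono_of_deriv_pos
    intro x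
    rw [(main_hasDeriv a x).deriv]
    positivity
  refine ⟨?_, ?_, ?_, ?_, ?_, ?_⟩
  · have := (hW _ (Real.exp_pos (p + q * F - (C + 1))).le).1
    linarith
  · intro F₁ _ F₂ _ h
    rw [hWeq, hWeq]
    have : lamS (p + q * F₁ - (C + 1)) < lamS (p + q * F₂ - (C + 1)) :=
      lamS_strictMono (by nlinarith)
    have := Real.exp_lt_exp.2 this
    linarith
  · intro p₁ p₂ _ h
    rw [hWeq, hWeq]
    have : lamS (p₁ + q * F - (C + 1)) < lamS (p₂ + q * F - (C + 1)) :=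
      lamS_strictMono (by linarith)
    have := Real.exp_lt_exp.2 this
    linarith
  · intro C₁ C₂ _ h
    rw [hWeq, hWeq]
    exact hmono (p + q * F) h
  · rw [hWeq]
    have : (fun c : ℝ => c + 1 + W (Real.exp (p + q * F - (c + 1)))) =
        fun c : ℝ => c + 1 + Real.exp (lamS (p + q * F - (c + 1))) := by
      funext c; rw [hWeq]
    rw [this]
    exact main_hasDeriv (p + q * F) C
  · rw [hWeq]
    constructor
    · positivity
    · rw [div_lt_one (by positivity)]
      have := Real.exp_pos (lamS (p + q * F - (C + 1)))
      linarith
end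

section
/- The maximal single-period profit equals V(F) = (1-F)·W(e^{p+qF-(C+1)}), i.e., substituting π*(F) = C+1+W(e^{p+qF-(C+1)}) into H(F,π) = (π-C)(1-F)e^{p+qF-π}/(1+e^{p+qF-π}) yields (1-F)·W(e^{p+qF-(C+1)}). -/
noncomputable section

/-- Substituting the optimal price `π*(F) = C+1+W(e^{p+qF-(C+1)})` into `H`
yields the maximal single-period profit `(1-F)·W(e^{p+qF-(C+1)})`. -/
theorem stmt_6 (C p q : ℝ) (hC : 0 ≤ C)
    (W : ℝ → ℝ) (hW : ∀ z : ℝ, 0 ≤ z → 0 ≤ W z ∧ W z * Real.exp (W z) = z)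
    (F : ℝ) (hF : F ∈ Set.Icc (0:ℝ) 1) :
    H C p q F (C + 1 + W (Real.exp (p + q * F - (C + 1)))) =
      (1 - F) * W (Real.exp (p + q * F - (C + 1))) := by
  set a := p + q * F - (C + 1) with ha
  obtain ⟨hw0, hwe⟩ := hW (Real.exp a) (Real.exp_pos a).le
  set w := W (Real.exp a) with hwdef
  have key : Real.exp (p + q * F - (C + 1 + w)) = w := by
    have : p + q * F - (C + 1 + w) = a - w := by rw [ha]; ring
    rw [this, Real.exp_sub]
    field_simp
    linear_combination -hwe
  have h1w : (0:ℝ) < 1 + w := by linarith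
  unfold H
  rw [key]
  field_simp
  ring
end
end

section
/- If 0 ≤ q ≤ 1 then V(F) = (1-F)·W(e^{p+qF-(C+1)}) is concave on [0,1]; specifically V''(F) = [W q / (1+W)^3]·[(1-F)q - 2(1+W)^2] ≤ 0, where W = W(e^{p+qF-(C+1)}). -/
private lemma g_inj_aux {a b : ℝ} (ha : 0 ≤ a) (hb : 0 ≤ b)
    (h : a * Real.exp a = b * Real.exp b) : a = b := by
  rcases lt_trichotomy a b with hlt | heq | hgt
  · exfalso
    have h1 : a * Real.exp a ≤ a * Real.exp b :=
      mul_le_mul_of_nonneg_left (Real.exp_le_exp.2 hlt.le) ha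
    have h2 : a * Real.exp b < b * Real.exp b :=
      mul_lt_mul_of_pos_right hlt (Real.exp_pos b)
    linarith
  · exact heq
  · exfalso
    have h1 : b * Real.exp b ≤ b * Real.exp a :=
      mul_le_mul_of_nonneg_left (Real.exp_le_exp.2 hgt.le) hb
    have h2 : b * Real.exp a < a * Real.exp a :=
      mul_lt_mul_of_pos_right hgt (Real.exp_pos a)
    linarith

private lemma W_hasDerivAt (W : ℝ → ℝ)
    (hW : ∀ z : ℝ, 0 ≤ z → 0 ≤ W z ∧ W z * Real.exp (W z) = z)
    {z : ℝ} (hz : 0 < z) :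
    HasDerivAt W (((1 + W z) * Real.exp (W z))⁻¹) z := by
  obtain ⟨hW0, hWe⟩ := hW z hz.le
  set w₀ := W z with hw0
  have hw0pos : 0 < w₀ := by
    rcases hW0.lt_or_eq with h | h
    · exact h
    · exfalso; rw [← h] at hWe; simp at hWe; linarith
  have hg : HasStrictDerivAt (fun w : ℝ => w * Real.exp w)
      ((1 + w₀) * Real.exp w₀) w₀ := by
    have := (hasStrictDerivAt_id w₀).mul (Real.hasStrictDerivAt_exp w₀)
    refine this.congr_deriv ?_
    simp [id]; ring
  have hne : (1 + w₀) * Real.exp w₀ ≠ 0 :=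
    ne_of_gt (mul_pos (by linarith) (Real.exp_pos _))
  set φ := hg.localInverse _ _ _ hne with hφ
  have hloc : HasStrictDerivAt φ (((1 + w₀) * Real.exp w₀)⁻¹) z := by
    have := hg.to_localInverse (hf' := hne)
    rwa [hWe] at this
  -- eventual equality of W and φ near z
  have hFeq := (hg.hasStrictFDerivAt_equiv hne)
  have hright : ∀ᶠ y in nhds z, (fun w : ℝ => w * Real.exp w) (φ y) = y := by
    have := hFeq.eventually_right_inverse
    rwa [hWe] at this
  have hcont : ContinuousAt φ z := by
    have := hFeq.localInverse_continuousAt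
    rwa [hWe] at this
  have hφz : φ z = w₀ := by
    have := hFeq.localInverse_apply_image
    rwa [hWe] at this
  have hpos : ∀ᶠ y in nhds z, 0 < φ y := by
    have : Set.Ioi (0:ℝ) ∈ nhds (φ z) := by
      rw [hφz]; exact Ioi_mem_nhds hw0pos
    exact hcont this
  have hypos : ∀ᶠ y in nhds z, 0 < y := Ioi_mem_nhds hz
  have heq : W =ᶠ[nhds z] φ := by
    filter_upwards [hright, hpos, hypos] with y h1 h2 h3
    have hWy := hW y h3.le
    exact g_inj_aux hWy.1 h2.le (by rw [hWy.2, h1])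
  exact (hloc.hasDerivAt.congr_of_eventuallyEq heq)


/-- If `0 ≤ q ≤ 1` then `V(F) = (1-F)·W(e^{p+qF-(C+1)})` is concave on `[0,1]`, and its
second derivative equals `[Wq/(1+W)³]·[(1-F)q - 2(1+W)²] ≤ 0` with
`W = W(e^{p+qF-(C+1)})`. -/
theorem stmt_8 (C p q : ℝ) (hC : 0 ≤ C) (hq0 : 0 ≤ q) (hq1 : q ≤ 1)
    (W : ℝ → ℝ) (hW : ∀ z : ℝ, 0 ≤ z → 0 ≤ W z ∧ W z * Real.exp (W z) = z) :
    ConcaveOn ℝ (Set.Icc (0:ℝ) 1)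
      (fun F : ℝ => (1 - F) * W (Real.exp (p + q * F - (C + 1)))) ∧
    ∀ F ∈ Set.Icc (0:ℝ) 1,
      deriv (deriv (fun x : ℝ => (1 - x) * W (Real.exp (p + q * x - (C + 1))))) F =
        (W (Real.exp (p + q * F - (C + 1))) * q /
          (1 + W (Real.exp (p + q * F - (C + 1)))) ^ 3) *
          ((1 - F) * q - 2 * (1 + W (Real.exp (p + q * F - (C + 1)))) ^ 2) ∧
      (W (Real.exp (p + q * F - (C + 1))) * q /
          (1 + W (Real.exp (p + q * F - (C + 1)))) ^ 3) *
          ((1 - F) * q - 2 * (1 + W (Real.exp (p + q * F - (C + 1)))) ^ 2) ≤ 0 := by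
  set A : ℝ → ℝ := fun F => W (Real.exp (p + q * F - (C + 1))) with hAdef
  have hApos : ∀ F, 0 < A F := by
    intro F
    obtain ⟨h0, he⟩ := hW _ (Real.exp_pos (p + q * F - (C + 1))).le
    rcases h0.lt_or_eq with h | h
    · exact h
    · exfalso; rw [← h] at he; simp at he; exact (Real.exp_pos _).ne' he.symm
  have hAe : ∀ F, A F * Real.exp (A F) = Real.exp (p + q * F - (C + 1)) :=
    fun F => (hW _ (Real.exp_pos _).le).2
  have hA : ∀ F, HasDerivAt A (q * A F / (1 + A F)) F := by
    intro F
    have hu : HasDerivAt (fun x : ℝ => p + q * x - (C + 1)) q F := by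
      simpa using (((hasDerivAt_id F).const_mul q).const_add p).sub_const (C + 1)
    have hexp : HasDerivAt (fun x : ℝ => Real.exp (p + q * x - (C + 1)))
        (Real.exp (p + q * F - (C + 1)) * q) F := hu.exp
    have hWd := W_hasDerivAt W hW (Real.exp_pos (p + q * F - (C + 1)))
    have hcomp := hWd.comp F hexp
    have key : A F * Real.exp (W (Real.exp (p + q * F - (C + 1)))) =
        Real.exp (p + q * F - (C + 1)) := hAe F
    have h1 : (0:ℝ) < 1 + A F := by linarith [hApos F]
    have h1' : (1:ℝ) + W (Real.exp (p + q * F - (C + 1))) = 1 + A F := rfl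
    refine hcomp.congr_deriv ?_
    symm
    rw [h1']
    rw [eq_comm]
    have hexpne : Real.exp (W (Real.exp (p + q * F - (C + 1)))) ≠ 0 := Real.exp_ne_zero _
    field_simp
    linear_combination (-q) * key
  have hV : ∀ F, HasDerivAt (fun x : ℝ => (1 - x) * A x)
      (-(A F) + (1 - F) * (q * A F / (1 + A F))) F := by
    intro F
    have h1 : HasDerivAt (fun x : ℝ => 1 - x) (-1) F := by
      simpa using (hasDerivAt_id F).const_sub 1
    have := h1.mul (hA F)
    refine this.congr_deriv ?_; ring
  set D1 : ℝ → ℝ := fun F => -(A F) + (1 - F) * (q * A F / (1 + A F)) with hD1def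
  set D2 : ℝ → ℝ := fun F => (A F * q / (1 + A F) ^ 3) *
      ((1 - F) * q - 2 * (1 + A F) ^ 2) with hD2def
  have hD1 : ∀ F, HasDerivAt D1 (D2 F) F := by
    intro F
    have h1A : (1 + A F) ≠ 0 := by have := hApos F; positivity
    have hfrac : HasDerivAt (fun x => q * A x / (1 + A x))
        ((q * (q * A F / (1 + A F)) * (1 + A F) -
          q * A F * (q * A F / (1 + A F))) / (1 + A F) ^ 2) F :=
      ((hA F).const_mul q).div ((hA F).const_add 1) h1A
    have h1 : HasDerivAt (fun x : ℝ => 1 - x) (-1) F := by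
      simpa using (hasDerivAt_id F).const_sub 1
    have := ((hA F).neg).add (h1.mul hfrac)
    refine this.congr_deriv ?_
    symm
    show D2 F = _
    rw [hD2def]
    field_simp
    ring
  have hderivV : deriv (fun x : ℝ => (1 - x) * A x) = D1 :=
    funext fun F => (hV F).deriv
  have hkey : ∀ F, deriv (deriv (fun x : ℝ => (1 - x) * A x)) F = D2 F := by
    intro F
    rw [hderivV]
    exact (hD1 F).deriv
  have hsign : ∀ F ∈ Set.Icc (0:ℝ) 1, D2 F ≤ 0 := by
    intro F hF
    obtain ⟨hF0, hF1⟩ := hF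
    have hAF := hApos F
    have h1 : 0 ≤ A F * q / (1 + A F) ^ 3 := by positivity
    have h2 : (1 - F) * q - 2 * (1 + A F) ^ 2 ≤ 0 := by nlinarith
    exact mul_nonpos_of_nonneg_of_nonpos h1 h2
  have hconc : ConcaveOn ℝ (Set.Icc (0:ℝ) 1) (fun F : ℝ => (1 - F) * A F) := by
    apply concaveOn_of_deriv2_nonpos (convex_Icc 0 1)
    · exact fun x _ => ((hV x).differentiableAt).continuousAt.continuousWithinAt
    · exact fun x _ => ((hV x).differentiableAt).differentiableWithinAt
    · intro x _
      rw [hderivV]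
      exact ((hD1 x).differentiableAt).differentiableWithinAt
    · intro x hx
      have h2 : deriv^[2] (fun x : ℝ => (1 - x) * A x) x = D2 x := by
        simp only [Function.iterate_succ, Function.iterate_zero, Function.comp_apply, id]
        exact hkey x
      rw [h2]
      exact hsign x (interior_subset hx)
  refine ⟨hconc, ?_⟩
  intro F hF
  refine ⟨?_, ?_⟩
  · show deriv (deriv (fun x : ℝ => (1 - x) * A x)) F = D2 F
    exact hkey F
  · show D2 F ≤ 0
    exact hsign F hF
end

section
/- The function F ↦ (1-F)·W(e^{p+qF-(C+1)}) is Lipschitz continuous on [0,1], with Lipschitz constant at most W(e^{p+q-(C+1)})·(q/(1+W(e^{p-(C+1)})) + 1). -/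
/-- `F ↦ (1-F)·W(e^{p+qF-(C+1)})` is Lipschitz on `[0,1]` with constant at most
`W(e^{p+q-(C+1)})·(q/(1+W(e^{p-(C+1)})) + 1)`. -/
theorem stmt_11 (C p q : ℝ) (hC : 0 ≤ C) (hq : 0 ≤ q)
    (W : ℝ → ℝ) (hW : ∀ z : ℝ, 0 ≤ z → 0 ≤ W z ∧ W z * Real.exp (W z) = z) :
    LipschitzOnWith
      (Real.toNNReal
        (W (Real.exp (p + q - (C + 1))) *
          (q / (1 + W (Real.exp (p - (C + 1)))) + 1)))
      (fun F : ℝ => (1 - F) * W (Real.exp (p + q * F - (C + 1))))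
      (Set.Icc (0:ℝ) 1) := by
  have hWn : ∀ z, 0 ≤ z → 0 ≤ W z := fun z hz => (hW z hz).1
  have hWe : ∀ z, 0 ≤ z → W z * Real.exp (W z) = z := fun z hz => (hW z hz).2
  have hWpos : ∀ z, 0 < z → 0 < W z := by
    intro z hz
    rcases (hWn z hz.le).lt_or_eq with h | h
    · exact h
    · exfalso
      have h2 := hWe z hz.le
      rw [← h] at h2
      simp at h2
      linarith
  have hWmono : ∀ a b, 0 < a → a ≤ b → W a ≤ W b := by
    intro a b ha hab
    by_contra h
    push_neg at h
    have hb0 : 0 ≤ W b := hWn b (ha.le.trans hab)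
    have h1 : W b * Real.exp (W b) < W a * Real.exp (W a) :=
      calc W b * Real.exp (W b) < W a * Real.exp (W b) :=
            mul_lt_mul_of_pos_right h (Real.exp_pos _)
        _ ≤ W a * Real.exp (W a) :=
            mul_le_mul_of_nonneg_left (Real.exp_le_exp.mpr h.le) (hb0.trans h.le)
    rw [hWe a ha.le, hWe b (ha.le.trans hab)] at h1
    linarith
  set g : ℝ → ℝ := fun x => W (Real.exp (p + q * x - (C + 1))) with hg
  have hgpos : ∀ x : ℝ, 0 < g x := fun x => hWpos _ (Real.exp_pos _)
  have hgmono : ∀ x y : ℝ, x ≤ y → g x ≤ g y := by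
    intro x y hxy
    exact hWmono _ _ (Real.exp_pos _) (Real.exp_le_exp.mpr (by nlinarith))
  set Wmax := W (Real.exp (p + q - (C + 1))) with hWmax
  set Wmin := W (Real.exp (p - (C + 1))) with hWmin
  have hWmaxg : ∀ x : ℝ, x ≤ 1 → g x ≤ Wmax := by
    intro x hx
    have : g x ≤ g 1 := hgmono x 1 hx
    simpa [hg, mul_one] using this
  have hWming : ∀ x : ℝ, 0 ≤ x → Wmin ≤ g x := by
    intro x hx
    have : g 0 ≤ g x := hgmono 0 x hx
    simpa [hg] using this
  have hWminpos : 0 < Wmin := hWpos _ (Real.exp_pos _)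
  have hWmaxpos : 0 < Wmax := hWpos _ (Real.exp_pos _)
  -- key difference bound
  have hkey : ∀ x y : ℝ, x ≤ y → g y - g x ≤ q * (y - x) * g y / (1 + g y) := by
    intro x y hxy
    have ha := Real.exp_pos (p + q * x - (C + 1))
    have hb := Real.exp_pos (p + q * y - (C + 1))
    have hwa : 0 < g x := hgpos x
    have hwb : 0 < g y := hgpos y
    have hab : g x ≤ g y := hgmono x y hxy
    -- log a = log (g x) + g x
    have hla : p + q * x - (C + 1) = Real.log (g x) + g x := by
      have := hWe _ ha.le
      calc p + q * x - (C + 1) = Real.log (Real.exp (p + q * x - (C + 1))) :=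
            (Real.log_exp _).symm
        _ = Real.log (g x * Real.exp (g x)) := by rw [this]
        _ = Real.log (g x) + g x := by
            rw [Real.log_mul (ne_of_gt hwa) (ne_of_gt (Real.exp_pos _)), Real.log_exp]
    have hlb : p + q * y - (C + 1) = Real.log (g y) + g y := by
      have := hWe _ hb.le
      calc p + q * y - (C + 1) = Real.log (Real.exp (p + q * y - (C + 1))) :=
            (Real.log_exp _).symm
        _ = Real.log (g y * Real.exp (g y)) := by rw [this]
        _ = Real.log (g y) + g y := by
            rw [Real.log_mul (ne_of_gt hwb) (ne_of_gt (Real.exp_pos _)), Real.log_exp]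
    have hdiff : Real.log (g y) - Real.log (g x) + (g y - g x) = q * (y - x) := by
      nlinarith [hla, hlb]
    have hlog : (g y - g x) / g y ≤ Real.log (g y) - Real.log (g x) := by
      have h1 : Real.log (g x / g y) ≤ g x / g y - 1 :=
        Real.log_le_sub_one_of_pos (div_pos hwa hwb)
      rw [Real.log_div (ne_of_gt hwa) (ne_of_gt hwb)] at h1
      have : g x / g y - 1 = -((g y - g x) / g y) := by field_simp; ring
      rw [this] at h1
      linarith
    -- (g y - g x) * (1 + g y) / g y ≤ q (y - x)
    have h2 : (g y - g x) / g y + (g y - g x) ≤ q * (y - x) := by linarith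
    have h3 : (g y - g x) + (g y - g x) * g y ≤ q * (y - x) * g y := by
      have h4 := mul_le_mul_of_nonneg_right h2 hwb.le
      rw [add_mul, div_mul_cancel₀ _ (ne_of_gt hwb)] at h4
      linarith
    rw [le_div_iff₀ (by positivity)]
    nlinarith
  -- the constant
  set K := Wmax * (q / (1 + Wmin) + 1) with hK
  have hK0 : 0 ≤ K := by positivity
  have hcoe : ((Real.toNNReal K : NNReal) : ℝ) = K := Real.coe_toNNReal _ hK0
  rw [lipschitzOnWith_iff_dist_le_mul]
  intro x hx y hy
  rw [Real.dist_eq, Real.dist_eq, hcoe]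
  obtain ⟨hx0, hx1⟩ := hx
  obtain ⟨hy0, hy1⟩ := hy
  have main : ∀ a b : ℝ, a ∈ Set.Icc (0:ℝ) 1 → b ∈ Set.Icc (0:ℝ) 1 → a ≤ b →
      |(1 - b) * g b - (1 - a) * g a| ≤ K * (b - a) := by
    intro a b ⟨ha0, ha1⟩ ⟨hb0, hb1⟩ hab
    have h1 : g b - g a ≤ q * (b - a) * g b / (1 + g b) := hkey a b hab
    have h2 : g a ≤ g b := hgmono a b hab
    have h3 : g b ≤ Wmax := hWmaxg b hb1
    have h4 : Wmin ≤ g b := hWming b hb0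
    have h5 : 0 < g a := hgpos a
    have h6 : 0 < g b := hgpos b
    have h7 : g a ≤ Wmax := hWmaxg a ha1
    have h8 : g b / (1 + g b) ≤ Wmax / (1 + Wmin) := by
      rw [div_le_div_iff₀ (by positivity) (by positivity)]
      nlinarith
    have hba : 0 ≤ b - a := by linarith
    have hgdiff : g b - g a ≤ q * (b - a) * (Wmax / (1 + Wmin)) := by
      calc g b - g a ≤ q * (b - a) * g b / (1 + g b) := h1
        _ = q * (b - a) * (g b / (1 + g b)) := by ring
        _ ≤ q * (b - a) * (Wmax / (1 + Wmin)) :=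
            mul_le_mul_of_nonneg_left h8 (by positivity)
    have hA0 : 0 ≤ q * (b - a) * (Wmax / (1 + Wmin)) := by positivity
    have hKeq : K * (b - a) = q * (b - a) * (Wmax / (1 + Wmin)) + Wmax * (b - a) := by
      rw [hK]; field_simp
    have h9 : (1 - b) * (g b - g a) ≤ 1 * (g b - g a) :=
      mul_le_mul_of_nonneg_right (by linarith) (by linarith)
    have h10 : 0 ≤ (1 - b) * (g b - g a) := mul_nonneg (by linarith) (by linarith)
    have h11 : (b - a) * g a ≤ (b - a) * Wmax := mul_le_mul_of_nonneg_left h7 hba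
    have h12 : 0 ≤ (b - a) * g a := mul_nonneg hba h5.le
    have hsplit : (1 - b) * g b - (1 - a) * g a = (1 - b) * (g b - g a) - (b - a) * g a := by
      ring
    have hW0 : 0 ≤ Wmax * (b - a) := mul_nonneg hWmaxpos.le hba
    have hcm : (b - a) * Wmax = Wmax * (b - a) := mul_comm _ _
    rw [hsplit, abs_le]
    constructor
    · linarith
    · linarith
  rcases le_total x y with h | h
  · have := main x y ⟨hx0, hx1⟩ ⟨hy0, hy1⟩ h
    rw [abs_sub_comm]
    calc |(1 - y) * g y - (1 - x) * g x| ≤ K * (y - x) := this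
      _ = K * |x - y| := by rw [abs_sub_comm, abs_of_nonneg (by linarith)]
  · have := main y x ⟨hy0, hy1⟩ ⟨hx0, hx1⟩ h
    calc |(1 - x) * g x - (1 - y) * g y| ≤ K * (x - y) := this
      _ = K * |x - y| := by rw [abs_of_nonneg (by linarith)]
end

section
/- In the single-period Stackelberg game, for any rebate r ≥ 0 the firm's best-response price is π*(r) = C + 1 + W(e^{p+qF_0+r-(C+1)}), and its derivative satisfies dπ*/dr = W/(1+W) ∈ (0,1), where W = W(e^{p+qF_0+r-(C+1)}). Consequently π*(r) - r is strictly decreasing in r. -/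
noncomputable def phiIso : ℝ ≃o ℝ :=
  StrictMono.orderIsoOfSurjective (fun x : ℝ => Real.exp x + x)
    (fun a b h => by
      have := Real.exp_lt_exp.2 h
      dsimp; linarith)
    ((Real.continuous_exp.add continuous_id).surjective
      (Filter.Tendsto.atTop_add_atTop Real.tendsto_exp_atTop Filter.tendsto_id)
      (Filter.Tendsto.add_atBot Real.tendsto_exp_atBot Filter.tendsto_id))

noncomputable def psi : ℝ → ℝ := phiIso.symm

lemma phi_psi (y : ℝ) : Real.exp (psi y) + psi y = y := phiIso.apply_symm_apply y

lemma psi_cont : Continuous psi := phiIso.symm.toHomeomorph.continuous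

lemma psi_hasDeriv (a : ℝ) : HasDerivAt psi (Real.exp (psi a) + 1)⁻¹ a := by
  have hf : HasDerivAt (fun x : ℝ => Real.exp x + x) (Real.exp (psi a) + 1) (psi a) :=
    (Real.hasDerivAt_exp _).add (hasDerivAt_id _)
  exact hf.of_local_left_inverse psi_cont.continuousAt
    (by positivity) (Filter.Eventually.of_forall phi_psi)

lemma xex_inj {x y : ℝ} (hx : 0 ≤ x) (hy : 0 ≤ y)
    (h : x * Real.exp x = y * Real.exp y) : x = y := by
  have key : ∀ a b : ℝ, 0 ≤ a → a < b → a * Real.exp a < b * Real.exp b := by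
    intro a b ha hab
    have h1 := Real.exp_lt_exp.2 hab
    nlinarith [Real.exp_pos a, Real.exp_pos b]
  rcases lt_trichotomy x y with h' | h' | h'
  · exact absurd h (ne_of_lt (key _ _ hx h'))
  · exact h'
  · exact absurd h.symm (ne_of_lt (key _ _ hy h'))

lemma one_sub_mul_exp_le (s : ℝ) : (1 - s) * Real.exp s ≤ 1 := by
  have h := Real.add_one_le_exp (-s)
  have h2 := Real.exp_pos s
  have h3 : Real.exp (-s) * Real.exp s = 1 := by
    rw [← Real.exp_add]; simp
  nlinarith

/-- Single-period Stackelberg game: for every rebate `r ≥ 0`, the firm's best response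
is `π*(r) = C+1+W(e^{p+qF₀+r-(C+1)})`, with `dπ*/dr = W/(1+W) ∈ (0,1)`; consequently
`π*(r) - r` is strictly decreasing in `r` on `[0,∞)`. -/
theorem stmt_15 (C p q F₀ : ℝ) (hC : 0 ≤ C) (hp : 0 ≤ p) (hq : 0 ≤ q)
    (hF₀ : F₀ ∈ Set.Ico (0:ℝ) 1)
    (W : ℝ → ℝ) (hW : ∀ z : ℝ, 0 ≤ z → 0 ≤ W z ∧ W z * Real.exp (W z) = z) :
    (∀ r : ℝ, 0 ≤ r →
      IsMaxOn
        (fun π : ℝ => (π - C) * (1 - F₀) *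
          (Real.exp (p + q * F₀ + r - π) / (1 + Real.exp (p + q * F₀ + r - π))))
        Set.univ (C + 1 + W (Real.exp (p + q * F₀ + r - (C + 1)))) ∧
      HasDerivAt (fun s : ℝ => C + 1 + W (Real.exp (p + q * F₀ + s - (C + 1))))
        (W (Real.exp (p + q * F₀ + r - (C + 1))) /
          (1 + W (Real.exp (p + q * F₀ + r - (C + 1))))) r ∧
      W (Real.exp (p + q * F₀ + r - (C + 1))) /
          (1 + W (Real.exp (p + q * F₀ + r - (C + 1)))) ∈ Set.Ioo (0:ℝ) 1) ∧
    StrictAntiOn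
      (fun r : ℝ => C + 1 + W (Real.exp (p + q * F₀ + r - (C + 1))) - r)
      (Set.Ici (0:ℝ)) := by
  obtain ⟨hF₀0, hF₀1⟩ := hF₀
  have h1F : 0 < 1 - F₀ := by linarith
  -- W (exp t) = exp (psi t) for every t
  have Wkey : ∀ t : ℝ, W (Real.exp t) = Real.exp (psi t) := by
    intro t
    obtain ⟨hW0, hWe⟩ := hW (Real.exp t) (Real.exp_pos t).le
    have hy : Real.exp (psi t) * Real.exp (Real.exp (psi t)) = Real.exp t := by
      rw [← Real.exp_add, add_comm, phi_psi]
    exact xex_inj hW0 (Real.exp_pos _).le (hWe.trans hy.symm)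
  have wpos : ∀ t : ℝ, 0 < W (Real.exp t) := fun t => (Wkey t) ▸ Real.exp_pos _
  have weq : ∀ t : ℝ, W (Real.exp t) * Real.exp (W (Real.exp t)) = Real.exp t :=
    fun t => (hW _ (Real.exp_pos t).le).2
  -- derivative of the best-response map at every real point
  have hder : ∀ r : ℝ,
      HasDerivAt (fun s : ℝ => C + 1 + W (Real.exp (p + q * F₀ + s - (C + 1))))
        (W (Real.exp (p + q * F₀ + r - (C + 1))) /
          (1 + W (Real.exp (p + q * F₀ + r - (C + 1))))) r := by
    intro r
    have hfun : (fun s : ℝ => C + 1 + W (Real.exp (p + q * F₀ + s - (C + 1))))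
        = fun s : ℝ => C + 1 + Real.exp (psi (p + q * F₀ + s - (C + 1))) :=
      funext fun s => by rw [Wkey]
    have ha : HasDerivAt (fun s : ℝ => p + q * F₀ + s - (C + 1)) 1 r := by
      simpa using ((hasDerivAt_id r).const_add (p + q * F₀)).sub_const (C + 1)
    have hψ := psi_hasDeriv (p + q * F₀ + r - (C + 1))
    have hcomp := (hψ.comp r ha).exp.const_add (C + 1)
    rw [hfun]
    refine hcomp.congr_deriv ?_
    rw [Wkey]
    set w := Real.exp (psi (p + q * F₀ + r - (C + 1))) with hw
    have hwpos : (0:ℝ) < w := Real.exp_pos _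
    have : (psi ∘ fun s => p + q * F₀ + s - (C + 1)) r
        = psi (p + q * F₀ + r - (C + 1)) := rfl
    rw [this, ← hw, mul_one, div_eq_mul_inv, add_comm 1 w]
  refine ⟨fun r hr => ?_, ?_⟩
  · set w := W (Real.exp (p + q * F₀ + r - (C + 1))) with hwdef
    have hwpos : 0 < w := wpos _
    have hwe : w * Real.exp w = Real.exp (p + q * F₀ + r - (C + 1)) := weq _
    have hw1 : 0 < 1 + w := by linarith
    refine ⟨?_, hder r, div_pos hwpos hw1, (div_lt_one hw1).2 (by linarith)⟩
    -- max
    rw [isMaxOn_iff]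
    intro π _
    set u := Real.exp (p + q * F₀ + r - π) with hudef
    have hupos : 0 < u := Real.exp_pos _
    have hu1 : 0 < 1 + u := by linarith
    have hu : u = w * Real.exp (w - (π - (C + 1))) := by
      rw [hudef, show p + q * F₀ + r - π
        = (p + q * F₀ + r - (C + 1)) + ((C + 1) - π) by ring, Real.exp_add, ← hwe,
        mul_assoc, ← Real.exp_add]
      ring_nf
    have hval : Real.exp (p + q * F₀ + r - (C + 1 + w)) = w := by
      rw [show p + q * F₀ + r - (C + 1 + w)
        = (p + q * F₀ + r - (C + 1)) + (-w) by ring, Real.exp_add, ← hwe,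
        mul_assoc, ← Real.exp_add]
      simp
    have key : (π - C) * u ≤ w * (1 + u) := by
      have hs := one_sub_mul_exp_le (w - (π - (C + 1)))
      have he := Real.exp_pos (w - (π - (C + 1)))
      nlinarith
    have hfrac : (π - C) * u / (1 + u) ≤ w :=
      (div_le_iff₀ hu1).2 (by linarith)
    calc (π - C) * (1 - F₀) * (u / (1 + u))
        = (1 - F₀) * ((π - C) * u / (1 + u)) := by ring
      _ ≤ (1 - F₀) * w := mul_le_mul_of_nonneg_left hfrac h1F.le
      _ = (C + 1 + w - C) * (1 - F₀) * (w / (1 + w)) := by field_simp; ring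
      _ = (C + 1 + w - C) * (1 - F₀) *
          (Real.exp (p + q * F₀ + r - (C + 1 + w)) /
            (1 + Real.exp (p + q * F₀ + r - (C + 1 + w)))) := by rw [hval]
  · -- strict antitone
    have : StrictAnti (fun r : ℝ => C + 1 + W (Real.exp (p + q * F₀ + r - (C + 1))) - r) := by
      apply strictAnti_of_deriv_neg
      intro x
      have hx : HasDerivAt (fun r : ℝ => C + 1 + W (Real.exp (p + q * F₀ + r - (C + 1))) - r)
          (W (Real.exp (p + q * F₀ + x - (C + 1))) /
            (1 + W (Real.exp (p + q * F₀ + x - (C + 1)))) - 1) x := by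
        exact (hder x).sub (hasDerivAt_id' x)
      rw [hx.deriv]
      have hwpos : 0 < W (Real.exp (p + q * F₀ + x - (C + 1))) := wpos _
      have hw1 : (0:ℝ) < 1 + W (Real.exp (p + q * F₀ + x - (C + 1))) := by linarith
      have := (div_lt_one hw1).2
        (show W (Real.exp (p + q * F₀ + x - (C + 1)))
          < 1 + W (Real.exp (p + q * F₀ + x - (C + 1))) by linarith)
      linarith
    exact this.strictAntiOn _
end

section
/- In the single-period Stackelberg game with β ≥ β_0 := (1 + W(e^{p+qF_0-(C+1)}))^{-2}, the policymaker's objective V^p(r) = (1-F_0)·R(F_0, π*(r), r)·(1 - βr) is nonincreasing on r ≥ 0, so the optimal rebate is r* = 0; if 0 < β < β_0, then V^p has a unique maximizer r* > 0, characterized by 1/β = r* + (1 + W(e^{p+qF_0+r*-(C+1)}))². -/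
theorem stmt17_aux (u β c : ℝ) (hc : 0 < c) (hβ : 0 < β) (g : ℝ → ℝ)
    (hgpos : ∀ r, 0 < g r) (hkey : ∀ r, Real.log (g r) + g r = u + r) :
    ((1 + g 0)⁻¹ ^ 2 ≤ β →
      AntitoneOn (fun r : ℝ => c * (1 - β * r) * (g r / (1 + g r))) (Set.Ici 0) ∧
      IsMaxOn (fun r : ℝ => c * (1 - β * r) * (g r / (1 + g r))) (Set.Ici 0) 0) ∧
    (β < (1 + g 0)⁻¹ ^ 2 →
      ∃! r : ℝ, 0 < r ∧
        IsMaxOn (fun s : ℝ => c * (1 - β * s) * (g s / (1 + g s))) (Set.Ici 0) r ∧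
        1 / β = r + (1 + g r) ^ 2) := by
  have hg1 : ∀ r, (0:ℝ) < 1 + g r := fun r => by linarith [hgpos r]
  -- strict monotonicity of g
  have hgmono : StrictMono g := by
    intro a b hab
    by_contra hle
    push_neg at hle
    have hlog : Real.log (g b) ≤ Real.log (g a) := by
      rcases eq_or_lt_of_le hle with h | h
      · rw [h]
      · exact (Real.log_lt_log (hgpos b) h).le
    have h1 := hkey a
    have h2 := hkey b
    linarith
  -- injectivity of w ↦ log w + w on positives
  have hinj : ∀ a b : ℝ, 0 < a → 0 < b → Real.log a + a = Real.log b + b → a = b := by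
    intro a b ha hb hab
    by_contra hne
    rcases lt_or_gt_of_ne hne with h | h
    · linarith [Real.log_lt_log ha h]
    · linarith [Real.log_lt_log hb h]
  -- surjectivity of g onto (0, ∞)
  have hsurj : ∀ w : ℝ, 0 < w → g (Real.log w + w - u) = w := by
    intro w hw
    have h1 := hkey (Real.log w + w - u)
    have h2 : Real.log (g (Real.log w + w - u)) + g (Real.log w + w - u)
        = Real.log w + w := by rw [h1]; ring
    exact hinj _ _ (hgpos _) hw h2
  have hrange : Set.range g = Set.Ioi 0 := by
    ext x
    constructor
    · rintro ⟨r, rfl⟩; exact hgpos r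
    · intro hx; exact ⟨_, hsurj x hx⟩
  -- continuity of g
  have hcont : Continuous g := by
    rw [continuous_iff_continuousAt]
    intro a
    apply StrictMonoOn.continuousAt_of_image_mem_nhds (s := Set.univ)
      (fun x _ y _ h => hgmono h) Filter.univ_mem
    rw [Set.image_univ, hrange]
    exact isOpen_Ioi.mem_nhds (hgpos a)
  -- g is differentiable with derivative g/(1+g)
  have hderiv : ∀ r, HasDerivAt g (g r / (1 + g r)) r := by
    intro r
    have hgr := hgpos r
    have hf : HasDerivAt (fun w : ℝ => Real.log w + w - u) ((g r)⁻¹ + 1) (g r) := by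
      simpa using ((Real.hasDerivAt_log hgr.ne').add (hasDerivAt_id (g r))).sub_const u
    have hf' : (g r)⁻¹ + 1 ≠ 0 := by positivity
    have hfg : ∀ᶠ y in nhds r, (fun w : ℝ => Real.log w + w - u) (g y) = y :=
      Filter.Eventually.of_forall fun y => by
        have := hkey y; simp only []; linarith
    have h := HasDerivAt.of_local_left_inverse hcont.continuousAt hf hf' hfg
    have heq : ((g r)⁻¹ + 1)⁻¹ = g r / (1 + g r) := by
      rw [show (g r)⁻¹ + 1 = (1 + g r) / (g r) by field_simp, inv_div]
    rwa [heq] at h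
  -- the objective and its derivative
  set V : ℝ → ℝ := fun r => c * (1 - β * r) * (g r / (1 + g r)) with hV
  have hVd : ∀ r, HasDerivAt V
      (c * (g r / (1 + g r) ^ 3) * (1 - β * (r + (1 + g r) ^ 2))) r := by
    intro r
    have hne : (1 + g r) ≠ 0 := (hg1 r).ne'
    have h1 : HasDerivAt (fun s : ℝ => c * (1 - β * s)) (c * (0 - β)) r := by
      have h0 : HasDerivAt (fun s : ℝ => 1 - β * s) (0 - β) r := by
        have := (hasDerivAt_const r (1:ℝ)).sub ((hasDerivAt_id' r).const_mul β)
        rwa [mul_one] at this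
      exact h0.const_mul c
    have h2 : HasDerivAt (fun s => g s / (1 + g s))
        ((g r / (1 + g r) * (1 + g r) - g r * (g r / (1 + g r))) / (1 + g r) ^ 2) r :=
      (hderiv r).div ((hderiv r).const_add 1) hne
    have h3 : HasDerivAt V _ r := h1.mul h2
    convert h3 using 1
    field_simp
    ring
  have hVdiff : ∀ r, DifferentiableAt ℝ V r := fun r => (hVd r).differentiableAt
  have hVcont : Continuous V := by
    apply Continuous.mul
    · exact continuous_const.mul (continuous_const.sub (continuous_const.mul continuous_id))
    · exact hcont.div (continuous_const.add hcont) fun x => (hg1 x).ne'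
  have hposfac : ∀ r, 0 < c * (g r / (1 + g r) ^ 3) :=
    fun r => mul_pos hc (div_pos (hgpos r) (pow_pos (hg1 r) 3))
  have hhmono : StrictMono fun r : ℝ => r + (1 + g r) ^ 2 := by
    intro a b hab
    have hg' := hgmono hab
    have h1 : (1 + g a) ^ 2 < (1 + g b) ^ 2 := by nlinarith [hgpos a, hgpos b]
    exact add_lt_add hab h1
  have hsq : (0:ℝ) < (1 + g 0) ^ 2 := pow_pos (hg1 0) 2
  constructor
  · -- case β ≥ β₀
    intro hb
    rw [inv_pow] at hb
    have hb1 : 1 ≤ β * (0 + (1 + g 0) ^ 2) := by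
      have h := mul_le_mul_of_nonneg_right hb hsq.le
      rw [inv_mul_cancel₀ hsq.ne'] at h
      linarith
    have hanti : AntitoneOn V (Set.Ici 0) := by
      apply antitoneOn_of_deriv_nonpos (convex_Ici 0) hVcont.continuousOn
        (fun x _ => (hVdiff x).differentiableWithinAt)
      intro x hx
      rw [(hVd x).deriv]
      rw [interior_Ici] at hx
      have hmx : (0:ℝ) + (1 + g 0) ^ 2 < x + (1 + g x) ^ 2 := hhmono hx
      have h1b : 1 ≤ β * (x + (1 + g x) ^ 2) := by nlinarith
      have h4 : 1 - β * (x + (1 + g x) ^ 2) ≤ 0 := by linarith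
      nlinarith [hposfac x]
    refine ⟨hanti, ?_⟩
    rw [isMaxOn_iff]
    intro x hx
    exact hanti Set.self_mem_Ici hx hx
  · -- case β < β₀
    intro hb
    rw [inv_pow] at hb
    have hb2 : β * (1 + g 0) ^ 2 < 1 := by
      have h := mul_lt_mul_of_pos_right hb hsq
      rwa [inv_mul_cancel₀ hsq.ne'] at h
    have hhcont : Continuous fun r : ℝ => r + (1 + g r) ^ 2 :=
      continuous_id.add ((continuous_const.add hcont).pow 2)
    have h0lt : (0:ℝ) + (1 + g 0) ^ 2 < 1 / β := by
      rw [zero_add, lt_div_iff₀ hβ]; nlinarith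
    have h1gt : 1 / β < (1 / β) + (1 + g (1 / β)) ^ 2 :=
      lt_add_of_pos_right _ (pow_pos (hg1 _) 2)
    have hβinv : (0:ℝ) ≤ 1 / β := by positivity
    obtain ⟨r, hrI, hre⟩ :=
      intermediate_value_Icc hβinv hhcont.continuousOn (Set.mem_Icc.mpr ⟨h0lt.le, h1gt.le⟩)
    have hre' : r + (1 + g r) ^ 2 = 1 / β := hre
    have hrpos : 0 < r := by
      rcases hrI.1.lt_or_eq with h | h
      · exact h
      · exfalso
        rw [← h] at hre'
        linarith
    -- sign of the derivative on each side of r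
    have hmono1 : MonotoneOn V (Set.Icc 0 r) := by
      apply monotoneOn_of_deriv_nonneg (convex_Icc 0 r) hVcont.continuousOn
        (fun x _ => (hVdiff x).differentiableWithinAt)
      intro x hx
      rw [(hVd x).deriv]
      rw [interior_Icc] at hx
      have hlt : x + (1 + g x) ^ 2 < 1 / β := lt_of_lt_of_le (hhmono hx.2) (le_of_eq hre')
      have h1b : β * (x + (1 + g x) ^ 2) < 1 := by
        have := mul_lt_mul_of_pos_left hlt hβ
        rwa [mul_one_div_cancel hβ.ne'] at this
      nlinarith [hposfac x]
    have hanti1 : AntitoneOn V (Set.Ici r) := by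
      apply antitoneOn_of_deriv_nonpos (convex_Ici r) hVcont.continuousOn
        (fun x _ => (hVdiff x).differentiableWithinAt)
      intro x hx
      rw [(hVd x).deriv]
      rw [interior_Ici] at hx
      have hlt : 1 / β < x + (1 + g x) ^ 2 := by
        rw [← hre']; exact hhmono hx
      have h1b : 1 < β * (x + (1 + g x) ^ 2) := by
        have := mul_lt_mul_of_pos_left hlt hβ
        rwa [mul_one_div_cancel hβ.ne'] at this
      nlinarith [hposfac x]
    refine ⟨r, ⟨hrpos, ?_, hre'.symm⟩, ?_⟩
    · rw [isMaxOn_iff]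
      intro x hx
      rcases le_total x r with hle | hle
      · exact hmono1 ⟨hx, hle⟩ ⟨hrpos.le, le_refl r⟩ hle
      · exact hanti1 (Set.self_mem_Ici) hle hle
    · rintro r' ⟨hr'pos, _, hr'eq⟩
      apply hhmono.injective
      show r' + (1 + g r') ^ 2 = r + (1 + g r) ^ 2
      rw [← hr'eq, hre']

/-- Single-period Stackelberg game. With
`V^p(r) = (1-F₀)(1-βr)·W/(1+W)`, `W = W(e^{p+qF₀+r-(C+1)})` and
`β₀ = (1+W(e^{p+qF₀-(C+1)}))⁻²`: if `β ≥ β₀` then `V^p` is nonincreasing on `[0,∞)` and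
`r* = 0` is optimal; if `0 < β < β₀` then `V^p` has a unique maximizer `r* > 0` on
`[0,∞)`, characterized by `1/β = r* + (1+W(e^{p+qF₀+r*-(C+1)}))²`. -/
theorem stmt_17 (C p q F₀ β : ℝ) (hC : 0 ≤ C) (hp : 0 ≤ p) (hq : 0 ≤ q)
    (hF₀ : F₀ ∈ Set.Ico (0:ℝ) 1) (hβ : 0 < β)
    (W : ℝ → ℝ) (hW : ∀ z : ℝ, 0 ≤ z → 0 ≤ W z ∧ W z * Real.exp (W z) = z) :
    ((1 + W (Real.exp (p + q * F₀ - (C + 1))))⁻¹ ^ 2 ≤ β →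
      AntitoneOn
        (fun r : ℝ => (1 - F₀) * (1 - β * r) *
          (W (Real.exp (p + q * F₀ + r - (C + 1))) /
            (1 + W (Real.exp (p + q * F₀ + r - (C + 1))))))
        (Set.Ici (0:ℝ)) ∧
      IsMaxOn
        (fun r : ℝ => (1 - F₀) * (1 - β * r) *
          (W (Real.exp (p + q * F₀ + r - (C + 1))) /
            (1 + W (Real.exp (p + q * F₀ + r - (C + 1))))))
        (Set.Ici (0:ℝ)) 0) ∧
    (β < (1 + W (Real.exp (p + q * F₀ - (C + 1))))⁻¹ ^ 2 →
      ∃! r : ℝ, 0 < r ∧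
        IsMaxOn
          (fun s : ℝ => (1 - F₀) * (1 - β * s) *
            (W (Real.exp (p + q * F₀ + s - (C + 1))) /
              (1 + W (Real.exp (p + q * F₀ + s - (C + 1))))))
          (Set.Ici (0:ℝ)) r ∧
        1 / β = r + (1 + W (Real.exp (p + q * F₀ + r - (C + 1)))) ^ 2) := by
  obtain ⟨hF0, hF1⟩ := hF₀
  have hc : (0:ℝ) < 1 - F₀ := by linarith
  set u : ℝ := p + q * F₀ - (C + 1) with hu
  have hrw : ∀ r : ℝ, p + q * F₀ + r - (C + 1) = u + r := fun r => by rw [hu]; ring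
  have hu0 : p + q * F₀ - (C + 1) = u + 0 := by rw [hu]; ring
  set g : ℝ → ℝ := fun r => W (Real.exp (u + r)) with hg
  have hgpos : ∀ r, 0 < g r := by
    intro r
    obtain ⟨h1, h2⟩ := hW (Real.exp (u + r)) (Real.exp_pos _).le
    rcases h1.lt_or_eq with h | h
    · exact h
    · exfalso
      have := Real.exp_pos (u + r)
      rw [← h2, ← h] at this
      simp at this
  have hkey : ∀ r, Real.log (g r) + g r = u + r := by
    intro r
    obtain ⟨h1, h2⟩ := hW (Real.exp (u + r)) (Real.exp_pos _).le
    have h3 : Real.log (g r * Real.exp (g r)) = u + r := by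
      rw [hg]; simp only []; rw [h2, Real.log_exp]
    rwa [Real.log_mul (hgpos r).ne' (Real.exp_ne_zero _), Real.log_exp] at h3
  have H := stmt17_aux u β (1 - F₀) hc hβ g hgpos hkey
  have hg0 : W (Real.exp u) = g 0 := by rw [hg]; simp
  rw [hg0]
  simp only [hrw]
  exact H
end

section
/- The equilibrium final adoption level F_1(r) = F_0 + (1-F_0)·W/(1+W), with W = W(e^{p+qF_0+r-(C+1)}), is strictly increasing in the rebate r; specifically dF_1/dr = (1-F_0)·W/(1+W)³ > 0 for F_0 < 1. In particular, any positive optimal rebate yields strictly higher final adoption than no rebate. -/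
open Real Filter

private lemma psi_strictMono : StrictMono (fun t : ℝ => Real.exp t + t) :=
  fun a b h => by have := Real.exp_lt_exp.2 h; simpa using by linarith

private lemma psi_surjective : Function.Surjective (fun t : ℝ => Real.exp t + t) := by
  apply (Real.continuous_exp.add continuous_id).surjective
  · exact Filter.Tendsto.atTop_add_atTop Real.tendsto_exp_atTop tendsto_id
  · apply tendsto_atBot_mono' _ ?_ (tendsto_atBot_add_const_left _ 1 tendsto_id)
    filter_upwards [eventually_le_atBot (0:ℝ)] with t ht
    have : Real.exp t ≤ 1 := Real.exp_le_one_iff.2 ht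
    simp only [Pi.add_apply, id]; linarith

private noncomputable def psiIso : ℝ ≃o ℝ :=
  StrictMono.orderIsoOfSurjective _ psi_strictMono psi_surjective

private noncomputable def uu : ℝ → ℝ := fun x => psiIso.symm x

private lemma psi_uu (x : ℝ) : Real.exp (uu x) + uu x = x :=
  psiIso.apply_symm_apply x

private lemma uu_cont : Continuous uu := psiIso.symm.toHomeomorph.continuous

private lemma hasDerivAt_uu (x : ℝ) :
    HasDerivAt uu (Real.exp (uu x) + 1)⁻¹ x := by
  have hψ : HasDerivAt (fun t : ℝ => Real.exp t + t) (Real.exp (uu x) + 1) (uu x) :=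
    (Real.hasDerivAt_exp (uu x)).add (hasDerivAt_id (uu x))
  exact hψ.of_local_left_inverse uu_cont.continuousAt
    (by positivity) (Filter.Eventually.of_forall psi_uu)

/-- `W ∘ exp` equals `exp ∘ uu` given the defining property of `W`. -/
private lemma W_exp_eq (W : ℝ → ℝ)
    (hW : ∀ z : ℝ, 0 ≤ z → 0 ≤ W z ∧ W z * Real.exp (W z) = z) (x : ℝ) :
    W (Real.exp x) = Real.exp (uu x) := by
  obtain ⟨h0, hWe⟩ := hW (Real.exp x) (Real.exp_pos x).le
  set w := W (Real.exp x) with hw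
  have hwpos : 0 < w := by
    rcases h0.lt_or_eq with h | h
    · exact h
    · exfalso; rw [← h] at hWe; simp at hWe
      exact (Real.exp_pos x).ne' hWe.symm
  have hlog : Real.exp (Real.log w) + Real.log w = x := by
    have := congrArg Real.log hWe
    rw [Real.log_mul hwpos.ne' (Real.exp_pos _).ne', Real.log_exp, Real.log_exp] at this
    rw [Real.exp_log hwpos]; linarith
  have : Real.log w = uu x := by
    have h2 := psi_uu x
    exact psi_strictMono.injective
      (show Real.exp (Real.log w) + Real.log w = Real.exp (uu x) + uu x by linarith)
  rw [← this, Real.exp_log hwpos]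

private lemma hasDerivAt_Wexp (W : ℝ → ℝ)
    (hW : ∀ z : ℝ, 0 ≤ z → 0 ≤ W z ∧ W z * Real.exp (W z) = z) (x : ℝ) :
    HasDerivAt (fun s => W (Real.exp s))
      (W (Real.exp x) / (1 + W (Real.exp x))) x := by
  have h : HasDerivAt (fun s => Real.exp (uu s))
      (Real.exp (uu x) * (Real.exp (uu x) + 1)⁻¹) x := (hasDerivAt_uu x).exp
  have heq : (fun s => W (Real.exp s)) = fun s => Real.exp (uu s) :=
    funext (W_exp_eq W hW)
  rw [heq, W_exp_eq W hW]
  convert h using 1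
  rw [div_eq_mul_inv, add_comm]

/-- The equilibrium final adoption level
`F₁(r) = F₀ + (1-F₀)·W/(1+W)`, `W = W(e^{p+qF₀+r-(C+1)})`, is strictly increasing in the
rebate `r`, with derivative `(1-F₀)·W/(1+W)³ > 0` when `F₀ < 1`; in particular any
positive rebate yields strictly higher final adoption than no rebate. -/
theorem stmt_19 (C p q F₀ : ℝ) (hC : 0 ≤ C) (hp : 0 ≤ p) (hq : 0 ≤ q)
    (hF₀ : F₀ ∈ Set.Ico (0:ℝ) 1)
    (W : ℝ → ℝ) (hW : ∀ z : ℝ, 0 ≤ z → 0 ≤ W z ∧ W z * Real.exp (W z) = z) :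
    (∀ r : ℝ,
      HasDerivAt
        (fun s : ℝ => F₀ + (1 - F₀) *
          (W (Real.exp (p + q * F₀ + s - (C + 1))) /
            (1 + W (Real.exp (p + q * F₀ + s - (C + 1))))))
        ((1 - F₀) * W (Real.exp (p + q * F₀ + r - (C + 1))) /
          (1 + W (Real.exp (p + q * F₀ + r - (C + 1)))) ^ 3) r ∧
      0 < (1 - F₀) * W (Real.exp (p + q * F₀ + r - (C + 1))) /
          (1 + W (Real.exp (p + q * F₀ + r - (C + 1)))) ^ 3) ∧
    StrictMono
      (fun r : ℝ => F₀ + (1 - F₀) *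
        (W (Real.exp (p + q * F₀ + r - (C + 1))) /
          (1 + W (Real.exp (p + q * F₀ + r - (C + 1)))))) ∧
    (∀ r : ℝ, 0 < r →
      F₀ + (1 - F₀) *
        (W (Real.exp (p + q * F₀ - (C + 1))) /
          (1 + W (Real.exp (p + q * F₀ - (C + 1))))) <
      F₀ + (1 - F₀) *
        (W (Real.exp (p + q * F₀ + r - (C + 1))) /
          (1 + W (Real.exp (p + q * F₀ + r - (C + 1)))))) := by
  obtain ⟨hF0, hF1⟩ := hF₀
  have h1F : (0:ℝ) < 1 - F₀ := by linarith
  have hWpos : ∀ x : ℝ, 0 < W (Real.exp x) := fun x => by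
    rw [W_exp_eq W hW]; exact Real.exp_pos _
  have key : ∀ r : ℝ,
      HasDerivAt
        (fun s : ℝ => F₀ + (1 - F₀) *
          (W (Real.exp (p + q * F₀ + s - (C + 1))) /
            (1 + W (Real.exp (p + q * F₀ + s - (C + 1))))))
        ((1 - F₀) * W (Real.exp (p + q * F₀ + r - (C + 1))) /
          (1 + W (Real.exp (p + q * F₀ + r - (C + 1)))) ^ 3) r := by
    intro r
    set G := W (Real.exp (p + q * F₀ + r - (C + 1))) with hG
    have hGpos : 0 < G := hWpos _
    have hG1 : (0:ℝ) < 1 + G := by linarith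
    have hlin : HasDerivAt (fun s : ℝ => p + q * F₀ + s - (C + 1)) 1 r := by
      simpa using (((hasDerivAt_id r).const_add (p + q * F₀)).sub_const (C + 1))
    have hWs : HasDerivAt (fun s : ℝ => W (Real.exp (p + q * F₀ + s - (C + 1))))
        (G / (1 + G)) r := by
      have := (hasDerivAt_Wexp W hW (p + q * F₀ + r - (C + 1))).comp r hlin
      rw [mul_one] at this; exact this
    have hquot : HasDerivAt
        (fun s : ℝ => W (Real.exp (p + q * F₀ + s - (C + 1))) /
          (1 + W (Real.exp (p + q * F₀ + s - (C + 1)))))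
        (G / (1 + G) ^ 3) r := by
      have hden : HasDerivAt
          (fun s : ℝ => 1 + W (Real.exp (p + q * F₀ + s - (C + 1))))
          (G / (1 + G)) r := hWs.const_add 1
      have := hWs.div hden hG1.ne'
      refine HasDerivAt.congr_deriv this ?_
      rw [← hG]
      field_simp
      ring
    have := (hquot.const_mul (1 - F₀)).const_add F₀
    refine HasDerivAt.congr_deriv this ?_
    field_simp
  refine ⟨fun r => ⟨key r, ?_⟩, ?_, ?_⟩
  · have hGpos := hWpos (p + q * F₀ + r - (C + 1))
    have hG1 : (0:ℝ) < 1 + W (Real.exp (p + q * F₀ + r - (C + 1))) := by linarith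
    positivity
  · have hmono : StrictMono
        (fun r : ℝ => F₀ + (1 - F₀) *
          (W (Real.exp (p + q * F₀ + r - (C + 1))) /
            (1 + W (Real.exp (p + q * F₀ + r - (C + 1)))))) := by
      apply strictMono_of_deriv_pos
      intro r
      rw [(key r).deriv]
      have hGpos := hWpos (p + q * F₀ + r - (C + 1))
      have hG1 : (0:ℝ) < 1 + W (Real.exp (p + q * F₀ + r - (C + 1))) := by linarith
      positivity
    exact hmono
  · intro r hr
    have hmono : StrictMono
        (fun r : ℝ => F₀ + (1 - F₀) *
          (W (Real.exp (p + q * F₀ + r - (C + 1))) /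
            (1 + W (Real.exp (p + q * F₀ + r - (C + 1)))))) := by
      apply strictMono_of_deriv_pos
      intro r
      rw [(key r).deriv]
      have hGpos := hWpos (p + q * F₀ + r - (C + 1))
      have hG1 : (0:ℝ) < 1 + W (Real.exp (p + q * F₀ + r - (C + 1))) := by linarith
      positivity
    have := hmono hr
    simpa using this
end
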